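/- Let p be a prime and let K be a field of characteristic p equipped with a nonarchimedean absolute value |·|_v. Let d = s·p^ℓ where ℓ ≥ 0, s ≥ 2 and s is coprime to p (so d ≥ 2 is not a power of p). Let α, β ∈ K with |α|_v = |β|_v > 1, set ε = β^d − α^d, and assume |ε|_v < |α|_v, |ε|_v ≥ 1, and moreover |ε|_v > 1 in case d = 2. Set λ₂ = α − α^d. Then f_{λ₂}(α) = α (so α is a fixed point of f_{λ₂}), while |f_{λ₂}^2(β)|_v = |α|_v^{(s−1)p^ℓ}·|ε|_v^{p^ℓ} > |α|_v and |f_{λ₂}^n(β)|_v → ∞ as n → ∞. -/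

import Mathlib

open Filter

section AuxLemmas
open Finset

theorem aux_nonarch_add_eq {K : Type*} [Field K] (v : AbsoluteValue K ℝ)
    (hv : IsNonarchimedean v) {x y : K} (h : v y < v x) : v (x + y) = v x := by
  have h1 : v x ≤ max (v (x + y)) (v y) := by
    have := hv (x + y) (-y)
    simpa using this
  rcases le_max_iff.mp h1 with h2 | h2
  · exact le_antisymm (le_trans (hv x y) (max_le le_rfl h.le)) h2
  · exact absurd h2 (not_le.mpr h)

theorem aux_nonarch_sum_le {K : Type*} [Field K] (v : AbsoluteValue K ℝ)
    (hv : IsNonarchimedean v) {ι : Type*} (S : Finset ι) (f : ι → K) {B : ℝ}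
    (hB : 0 ≤ B) (h : ∀ i ∈ S, v (f i) ≤ B) : v (∑ i ∈ S, f i) ≤ B := by
  classical
  induction S using Finset.induction_on with
  | empty => simpa using hB
  | @insert a s hx ih =>
    rw [Finset.sum_insert hx]
    exact le_trans (hv _ _) (max_le (h a (Finset.mem_insert_self a s))
      (ih fun i hi => h i (Finset.mem_insert_of_mem hi)))

theorem aux_pow_sub_pow_le {K : Type*} [Field K] (v : AbsoluteValue K ℝ)
    (hv : IsNonarchimedean v) {A E : K} (hAE : v E ≤ v A) (m : ℕ) :
    v ((A + E) ^ m - A ^ m) ≤ v E * v A ^ (m - 1) := by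
  have hid : (A + E) ^ m - A ^ m = (∑ i ∈ range m, (A + E) ^ i * A ^ (m - 1 - i)) * E := by
    rw [← geom_sum₂_mul]
    ring_nf
  rw [hid, v.map_mul, mul_comm]
  refine mul_le_mul_of_nonneg_left ?_ (v.nonneg E)
  refine aux_nonarch_sum_le v hv _ _ (by positivity) ?_
  intro i hi
  rw [v.map_mul, v.map_pow, v.map_pow]
  calc v (A + E) ^ i * v A ^ (m - 1 - i) ≤ v A ^ i * v A ^ (m - 1 - i) := by
        refine mul_le_mul_of_nonneg_right (pow_le_pow_left₀ (v.nonneg _) ?_ i) (by positivity)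
        exact le_trans (hv A E) (max_le le_rfl hAE)
    _ = v A ^ (m - 1) := by
        rw [← pow_add]
        congr 1
        have := Finset.mem_range.mp hi
        omega

theorem aux_key_eq {K : Type*} [Field K] (v : AbsoluteValue K ℝ)
    (hv : IsNonarchimedean v) {A E : K} {s : ℕ} (hs : 2 ≤ s) (hEA : v E < v A)
    (hsK : v ((s : K)) = 1) : v ((A + E) ^ s - A ^ s) = v A ^ (s - 1) * v E := by
  have hA0 : 0 < v A := lt_of_le_of_lt (v.nonneg E) hEA
  have hid : (A + E) ^ s - A ^ s = (∑ i ∈ range s, (A + E) ^ i * A ^ (s - 1 - i)) * E := by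
    rw [← geom_sum₂_mul]; ring_nf
  have hsplit : (∑ i ∈ range s, (A + E) ^ i * A ^ (s - 1 - i))
      = (s : K) * A ^ (s - 1) + ∑ i ∈ range s, ((A + E) ^ i - A ^ i) * A ^ (s - 1 - i) := by
    have hterm : ∀ i ∈ range s, (A + E) ^ i * A ^ (s - 1 - i)
        = A ^ (s - 1) + ((A + E) ^ i - A ^ i) * A ^ (s - 1 - i) := by
      intro i hi
      have h2 : A ^ i * A ^ (s - 1 - i) = A ^ (s - 1) := by
        rw [← pow_add]; congr 1
        have := Finset.mem_range.mp hi; omega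
      rw [sub_mul, ← h2]; ring
    rw [Finset.sum_congr rfl hterm, Finset.sum_add_distrib, Finset.sum_const,
      Finset.card_range, nsmul_eq_mul]
  have hS2 : v (∑ i ∈ range s, ((A + E) ^ i - A ^ i) * A ^ (s - 1 - i))
      ≤ v E * v A ^ (s - 2) := by
    refine aux_nonarch_sum_le v hv _ _ (by positivity) ?_
    intro i hi
    rw [v.map_mul, v.map_pow]
    rcases Nat.eq_zero_or_pos i with rfl | hi1
    · simpa using by positivity
    calc v ((A + E) ^ i - A ^ i) * v A ^ (s - 1 - i)
        ≤ (v E * v A ^ (i - 1)) * v A ^ (s - 1 - i) :=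
          mul_le_mul_of_nonneg_right (aux_pow_sub_pow_le v hv hEA.le i) (by positivity)
      _ = v E * v A ^ (s - 2) := by
          rw [mul_assoc, ← pow_add]
          congr 2
          have := Finset.mem_range.mp hi
          omega
  have hmain : v ((s : K) * A ^ (s - 1)) = v A ^ (s - 1) := by
    rw [v.map_mul, v.map_pow, hsK, one_mul]
  have hlt : v (∑ i ∈ range s, ((A + E) ^ i - A ^ i) * A ^ (s - 1 - i))
      < v ((s : K) * A ^ (s - 1)) := by
    rw [hmain]
    refine lt_of_le_of_lt hS2 ?_
    have : v A ^ (s - 1) = v A * v A ^ (s - 2) := by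
      rw [← pow_succ']
      congr 1; omega
    rw [this]
    exact mul_lt_mul_of_pos_right hEA (by positivity)
  rw [hid, v.map_mul, hsplit, aux_nonarch_add_eq v hv hlt, hmain]

end AuxLemmas

/-- In characteristic `p`, with `d = s·p^ℓ`, `s ≥ 2` coprime to `p`, and a
nonarchimedean absolute value: if `|α|_v = |β|_v > 1`, `ε = β^d - α^d` satisfies
`1 ≤ |ε|_v < |α|_v` (with `1 < |ε|_v` when `d = 2`), then with `λ₂ = α - α^d`, `α` is a fixed
point of `f_{λ₂}`, while `|f_{λ₂}^2(β)|_v = |α|_v^((s-1)p^ℓ)·|ε|_v^(p^ℓ) > |α|_v` and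
`|f_{λ₂}^n(β)|_v → ∞`. -/

theorem fixed_point_vs_escaping_orbit
    (p : ℕ) [Fact p.Prime] (K : Type*) [Field K] [CharP K p]
    (v : AbsoluteValue K ℝ) (hv : IsNonarchimedean v)
    (s ℓ : ℕ) (hs2 : 2 ≤ s) (hsp : Nat.Coprime s p)
    (d : ℕ) (hd : d = s * p ^ ℓ)
    (α β : K) (heq : v α = v β) (hbig : 1 < v α)
    (hlt : v (β ^ d - α ^ d) < v α) (hge : 1 ≤ v (β ^ d - α ^ d))
    (hd2 : d = 2 → 1 < v (β ^ d - α ^ d)) :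
    (fun x : K => x ^ d + (α - α ^ d)) α = α ∧
    v ((fun x : K => x ^ d + (α - α ^ d))^[2] β)
      = v α ^ ((s - 1) * p ^ ℓ) * v (β ^ d - α ^ d) ^ p ^ ℓ ∧
    v α < v ((fun x : K => x ^ d + (α - α ^ d))^[2] β) ∧
    Tendsto (fun n : ℕ => v ((fun x : K => x ^ d + (α - α ^ d))^[n] β)) atTop atTop := by
  have hp : p.Prime := Fact.out
  set f : K → K := fun x => x ^ d + (α - α ^ d) with hf
  set ε : K := β ^ d - α ^ d with hε
  have hP0 : 0 < p ^ ℓ := pow_pos hp.pos ℓ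
  have hd1 : 1 < d := by
    have : 2 * 1 ≤ s * p ^ ℓ := Nat.mul_le_mul hs2 hP0
    omega
  have hα0 : (0:ℝ) < v α := lt_trans one_pos hbig
  -- fixed point
  have hfix : f α = α := by show α ^ d + (α - α ^ d) = α; ring
  -- v (s : K) = 1
  have hsK : v ((s : K)) = 1 := by
    have hz : (s : ZMod p) ≠ 0 := by
      rw [Ne, ZMod.natCast_eq_zero_iff]
      intro hdvd
      exact hp.one_lt.ne' (Nat.eq_one_of_dvd_one (hsp ▸ Nat.dvd_gcd hdvd dvd_rfl))
    have h1 : (s : ZMod p) ^ (p - 1) = 1 := ZMod.pow_card_sub_one_eq_one hz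
    have h2 : (s : K) ^ (p - 1) = 1 := by
      have := congrArg (ZMod.castHom (dvd_refl p) K) h1
      simpa using this
    have h3 : v ((s : K)) ^ (p - 1) = 1 := by
      rw [← v.map_pow, h2, v.map_one]
    have hp1 : p - 1 ≠ 0 := by have := hp.two_le; omega
    rcases lt_trichotomy (v ((s : K))) 1 with h | h | h
    · exact absurd h3 (ne_of_lt (pow_lt_one₀ (v.nonneg _) h hp1))
    · exact h
    · exact absurd h3 (ne_of_gt (one_lt_pow₀ h hp1))
  -- f β = α + ε
  have hfβ : f β = α + ε := by show β ^ d + (α - α ^ d) = α + ε; rw [hε]; ring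
  -- f^[2] β = ((A+E)^s - A^s) + α,  A = α^(p^ℓ), E = ε^(p^ℓ)
  set A : K := α ^ p ^ ℓ with hA
  set E : K := ε ^ p ^ ℓ with hE
  have hfrob : (α + ε) ^ d = (A + E) ^ s := by
    rw [hd, mul_comm, pow_mul, add_pow_char_pow]
  have hAs : A ^ s = α ^ d := by rw [hA, ← pow_mul, hd, mul_comm]
  have hf2 : f^[2] β = ((A + E) ^ s - A ^ s) + α := by
    rw [show (2:ℕ) = 1 + 1 from rfl, Function.iterate_add_apply, Function.iterate_one, hfβ]
    show (α + ε) ^ d + (α - α ^ d) = _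
    rw [hfrob, hAs]; ring
  have hEA : v E < v A := by
    rw [hE, hA, v.map_pow, v.map_pow]
    exact pow_lt_pow_left₀ hlt (v.nonneg _) hP0.ne'
  have hkey : v ((A + E) ^ s - A ^ s) = v α ^ ((s - 1) * p ^ ℓ) * v ε ^ p ^ ℓ := by
    rw [aux_key_eq v hv hs2 hEA hsK, hA, hE, v.map_pow, v.map_pow, ← pow_mul,
      mul_comm (p ^ ℓ) (s - 1)]
  -- the crucial lower bound
  have hcgt : v α < v α ^ ((s - 1) * p ^ ℓ) * v ε ^ p ^ ℓ := by
    have hεpow : (1:ℝ) ≤ v ε ^ p ^ ℓ := one_le_pow₀ hge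
    by_cases hcase : d = 2
    · have h2 : s * p ^ ℓ = 2 := by rw [← hd, hcase]
      have hseq : s = 2 := le_antisymm (Nat.le_of_dvd two_pos ⟨p ^ ℓ, h2.symm⟩) hs2
      have hP1 : p ^ ℓ = 1 := by rw [hseq] at h2; omega
      subst hseq
      rw [hP1]
      have hεgt := hd2 hcase
      simpa using by nlinarith
    · have hm2 : 2 ≤ (s - 1) * p ^ ℓ := by
        rcases Nat.lt_or_ge ((s - 1) * p ^ ℓ) 2 with h | h
        · exfalso
          have h1 : (s - 1) * p ^ ℓ = 1 := by
            have hpos : 0 < (s - 1) * p ^ ℓ := Nat.mul_pos (by omega) hP0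
            omega
          have h5a : s - 1 = 1 := Nat.eq_one_of_dvd_one ⟨p ^ ℓ, h1.symm⟩
          have h5b : p ^ ℓ = 1 := Nat.eq_one_of_dvd_one ⟨s - 1, by rw [mul_comm] at h1; exact h1.symm⟩
          exact hcase (by rw [hd, h5b, mul_one]; omega)
        · exact h
      calc v α < v α ^ ((s - 1) * p ^ ℓ) := by
            refine lt_of_lt_of_le ?_ (pow_le_pow_right₀ hbig.le hm2)
            nlinarith
        _ ≤ _ := le_mul_of_one_le_right (by positivity) hεpow
  have hc2 : v (f^[2] β) = v α ^ ((s - 1) * p ^ ℓ) * v ε ^ p ^ ℓ := by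
    rw [hf2, aux_nonarch_add_eq v hv (by rw [hkey]; exact hcgt), hkey]
  have hcα : v α < v (f^[2] β) := hc2 ▸ hcgt
  -- escape step
  have hstep : ∀ x : K, v α < v x → v (f x) = v x ^ d := by
    intro x hx
    have hx0 : 0 < v x := lt_trans hα0 hx
    have hαd : v (α - α ^ d) = v α ^ d := by
      have h1 : v α < v (α ^ d) := by
        rw [v.map_pow]
        calc v α = v α ^ 1 := (pow_one _).symm
          _ < v α ^ d := pow_lt_pow_right₀ hbig hd1
      have := aux_nonarch_add_eq v hv (x := -(α ^ d)) (y := α) (by simpa using h1)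
      rw [neg_add_eq_sub] at this
      rw [this]; simp [v.map_pow]
    have h2 : v (α - α ^ d) < v (x ^ d) := by
      rw [hαd, v.map_pow]
      exact pow_lt_pow_left₀ hx hα0.le (by omega)
    show v (x ^ d + (α - α ^ d)) = v x ^ d
    rw [aux_nonarch_add_eq v hv h2, v.map_pow]
  -- iterates
  have hiter : ∀ n : ℕ, v (f^[n + 2] β) = v (f^[2] β) ^ d ^ n := by
    intro n
    induction n with
    | zero => simp
    | succ n ih =>
      have hgt : v α < v (f^[n + 2] β) := by
        rw [ih]
        calc v α < v (f^[2] β) := hcα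
          _ = v (f^[2] β) ^ 1 := (pow_one _).symm
          _ ≤ v (f^[2] β) ^ d ^ n :=
            pow_le_pow_right₀ (le_trans hbig.le hcα.le) (Nat.one_le_pow _ _ (by omega))
      have : f^[n + 1 + 2] β = f (f^[n + 2] β) := by
        rw [show n + 1 + 2 = (n + 2) + 1 from rfl, Function.iterate_succ_apply']
      rw [this, hstep _ hgt, ih, ← pow_mul, ← pow_succ]
  have hcgt1 : 1 < v (f^[2] β) := lt_trans hbig hcα
  refine ⟨hfix, hc2, hcα, ?_⟩
  refine tendsto_atTop_mono' atTop ?_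
    ((tendsto_pow_atTop_atTop_of_one_lt hcgt1).comp (tendsto_sub_atTop_nat 2))
  filter_upwards [eventually_ge_atTop 2] with n hn
  obtain ⟨m, rfl⟩ := Nat.exists_eq_add_of_le hn
  show v (f^[2] β) ^ (2 + m - 2) ≤ v (f^[2 + m] β)
  rw [show 2 + m - 2 = m from by omega, add_comm 2 m, hiter m]
  exact pow_le_pow_right₀ hcgt1.le (Nat.lt_pow_self (n := m) hd1).le
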